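/- Let P₀Q₀, P₁Q₁, …, P_{m}Q_{m} be segments in ℝ², all making angle at most θ with a fixed line l (θ < π/2), with the points P₀, P₁, …, P_m in that order having orthogonal projections P'₀, …, P'_m onto l in that order, with each dist(P_i, P_{i+1}) > c·min(dist(P_i,Q_i), dist(P_{i+1},Q_{i+1})) for a constant c > 0, where each dist(P_iQ_i) ≥ dist(P₀Q₀), and with the projection P'_m lying within the projection interval [P'₀, Q'₀] of segment P₀Q₀. Then m < 2/(c·cos θ). -/

import Mathlib

noncomputable abbrev P2 := EuclideanSpace ℝ (Fin 2)

/-- Counting argument: segments P₀Q₀, …, P_mQ_m all nearly parallel to a line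
with direction v, whose left endpoints project in order, with consecutive left
endpoints at distance more than c·min of adjacent segment lengths, all segments
at least as long as P₀Q₀, and with the projection of P_m within the projection
interval of P₀Q₀; then m < 2/(c·cos θ). -/
theorem stmt15 (m : ℕ) (θ c : ℝ) (hθ0 : 0 ≤ θ) (hθ : θ < Real.pi / 2) (hc : 0 < c)
    (P Q : Fin (m + 1) → P2) (v : P2) (hv : ‖v‖ = 1)
    (hseg : ∀ i, P i ≠ Q i)
    (hang : ∀ i, InnerProductGeometry.angle (Q i - P i) v ≤ θ)
    (hcons : ∀ i : Fin m, InnerProductGeometry.angle (P i.succ - P i.castSucc) v ≤ θ)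
    (hord : ∀ i : Fin m, (inner ℝ (P i.castSucc) v : ℝ) ≤ (inner ℝ (P i.succ) v : ℝ))
    (hstep : ∀ i : Fin m, dist (P i.castSucc) (P i.succ) >
      c * min (dist (P i.castSucc) (Q i.castSucc)) (dist (P i.succ) (Q i.succ)))
    (hlong : ∀ i, dist (P 0) (Q 0) ≤ dist (P i) (Q i))
    (hin : (inner ℝ (P (Fin.last m)) v : ℝ) ∈
      Set.uIcc (inner ℝ (P 0) v : ℝ) (inner ℝ (Q 0) v : ℝ)) :
    (m : ℝ) < 2 / (c * Real.cos θ) := by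
  have hcos : 0 < Real.cos θ := Real.cos_pos_of_mem_Ioo ⟨by linarith [Real.pi_pos], hθ⟩
  have d0pos : 0 < dist (P 0) (Q 0) := dist_pos.mpr (hseg 0)
  set d0 : ℝ := dist (P 0) (Q 0) with hd0
  set B : ℝ := Real.cos θ * (c * d0) with hB
  have hBpos : 0 < B := by positivity
  -- key telescoping estimate
  have key : ∀ k : ℕ, ∀ h : k ≤ m,
      (inner ℝ (P 0) v : ℝ) + k * B ≤ (inner ℝ (P ⟨k, by omega⟩) v : ℝ) := by
    intro k
    induction k with
    | zero => intro h; simp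
    | succ k ih =>
      intro h
      have hk : k ≤ m := by omega
      have ihk := ih hk
      set i : Fin m := ⟨k, by omega⟩ with hi
      have hcs : i.castSucc = (⟨k, by omega⟩ : Fin (m+1)) := rfl
      have hsc : i.succ = (⟨k+1, by omega⟩ : Fin (m+1)) := rfl
      have hdist : c * d0 < dist (P i.castSucc) (P i.succ) := by
        have := hstep i
        have h1 := hlong i.castSucc
        have h2 := hlong i.succ
        have : c * d0 ≤ c * min (dist (P i.castSucc) (Q i.castSucc))
            (dist (P i.succ) (Q i.succ)) := by
          apply mul_le_mul_of_nonneg_left _ hc.le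
          exact le_min h1 h2
        linarith [hstep i]
      have hnorm : dist (P i.castSucc) (P i.succ) = ‖P i.succ - P i.castSucc‖ := by
        rw [dist_eq_norm, norm_sub_rev]
      have hinner : (inner ℝ (P i.succ - P i.castSucc) v : ℝ)
          ≥ Real.cos θ * ‖P i.succ - P i.castSucc‖ := by
        have hcosangle : Real.cos θ ≤ Real.cos (InnerProductGeometry.angle
            (P i.succ - P i.castSucc) v) := by
          apply Real.cos_le_cos_of_nonneg_of_le_pi (InnerProductGeometry.angle_nonneg _ _) _ (hcons i)
          linarith [Real.pi_pos, hθ]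
        have := InnerProductGeometry.cos_angle_mul_norm_mul_norm
          (P i.succ - P i.castSucc) v
        rw [hv, mul_one] at this
        rw [ge_iff_le, ← this]
        exact mul_le_mul_of_nonneg_right hcosangle (norm_nonneg _)
      have hstepB : B ≤ (inner ℝ (P i.succ) v : ℝ) - (inner ℝ (P i.castSucc) v : ℝ) := by
        have hsub : (inner ℝ (P i.succ - P i.castSucc) v : ℝ)
            = (inner ℝ (P i.succ) v : ℝ) - (inner ℝ (P i.castSucc) v : ℝ) :=
          inner_sub_left _ _ _
        rw [← hsub]
        calc B = Real.cos θ * (c * d0) := rfl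
          _ ≤ Real.cos θ * ‖P i.succ - P i.castSucc‖ := by
              apply mul_le_mul_of_nonneg_left _ hcos.le
              rw [← hnorm]; exact hdist.le
          _ ≤ _ := hinner
      have : (inner ℝ (P (⟨k, by omega⟩ : Fin (m+1))) v : ℝ)
          = (inner ℝ (P i.castSucc) v : ℝ) := rfl
      push_cast
      calc (inner ℝ (P 0) v : ℝ) + (k + 1) * B
          = ((inner ℝ (P 0) v : ℝ) + k * B) + B := by ring
        _ ≤ (inner ℝ (P i.castSucc) v : ℝ) + B := by rw [hcs]; linarith
        _ ≤ (inner ℝ (P i.succ) v : ℝ) := by linarith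
        _ = _ := by rw [hsc]
  have hlast : (⟨m, by omega⟩ : Fin (m+1)) = Fin.last m := rfl
  have hkeym := key m le_rfl
  rw [hlast] at hkeym
  -- bound from projection interval
  have habs : (inner ℝ (P (Fin.last m)) v : ℝ) - (inner ℝ (P 0) v : ℝ)
      ≤ |(inner ℝ (Q 0) v : ℝ) - (inner ℝ (P 0) v : ℝ)| := by
    rcases Set.mem_uIcc.mp hin with ⟨h1, h2⟩ | ⟨h1, h2⟩ <;>
      linarith [le_abs_self ((inner ℝ (Q 0) v : ℝ) - (inner ℝ (P 0) v : ℝ)),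
        abs_nonneg ((inner ℝ (Q 0) v : ℝ) - (inner ℝ (P 0) v : ℝ))]
  have habs2 : |(inner ℝ (Q 0) v : ℝ) - (inner ℝ (P 0) v : ℝ)| ≤ d0 := by
    have hsub : (inner ℝ (Q 0) v : ℝ) - (inner ℝ (P 0) v : ℝ)
        = (inner ℝ (Q 0 - P 0) v : ℝ) := (inner_sub_left _ _ _).symm
    rw [hsub]
    calc |(inner ℝ (Q 0 - P 0) v : ℝ)| ≤ ‖Q 0 - P 0‖ * ‖v‖ := abs_real_inner_le_norm _ _
      _ = d0 := by rw [hv, mul_one, hd0, dist_eq_norm, norm_sub_rev]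
  have hm : (m : ℝ) * B ≤ d0 := by linarith
  rw [lt_div_iff₀ (by positivity : (0:ℝ) < c * Real.cos θ)]
  nlinarith [hm, d0pos]
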